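/- Let (Ω, μ) be a finite measure space with normalized expectation E and U ≥ 0 measurable with E[U] = 1, E[e^U] < ∞. Let p* = μ(U>0)/μ(Ω). Then cov(e^U, U) := E[(U−1)e^U] ≥ (1 − p*)·(e^{1/p*} − 1) ≥ 0, with equality in the first inequality when U ∈ {0, 1/p*} a.e. -/

import Mathlib

open MeasureTheory Real Set

lemma gHasDeriv (x : ℝ) : HasDerivAt (fun u => (u - 1) * Real.exp u) (x * Real.exp x) x := by
  have h := ((hasDerivAt_id x).sub_const 1).mul (Real.hasDerivAt_exp x)
  exact h.congr_deriv (by simp only [id]; ring)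

lemma gHasDeriv' (x : ℝ) : HasDerivAt (fun u => u * Real.exp u) ((x + 1) * Real.exp x) x := by
  have h := (hasDerivAt_id x).mul (Real.hasDerivAt_exp x)
  exact h.congr_deriv (by simp only [id]; ring)

lemma gconv : ConvexOn ℝ (Ici (0:ℝ)) (fun u => (u - 1) * Real.exp u) := by
  apply convexOn_of_hasDerivWithinAt2_nonneg (convex_Ici 0)
    (f' := fun u => u * Real.exp u) (f'' := fun u => (u + 1) * Real.exp u)
  · exact (Continuous.mul (by continuity) Real.continuous_exp).continuousOn
  · exact fun x _ => (gHasDeriv x).hasDerivWithinAt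
  · exact fun x _ => (gHasDeriv' x).hasDerivWithinAt
  · intro x hx
    rw [interior_Ici] at hx
    have hx' : (0:ℝ) < x := hx
    positivity

lemma algebra_id {a N : ℝ} (ha : 0 < a) (hN : 0 < N) :
    (-(N - a) + a * ((N / a - 1) * Real.exp (N / a))) / N
      = (1 - a / N) * (Real.exp (N / a) - 1) := by
  field_simp
  ring

/-- Selective change of the exponential observable:
`cov(e^U, U) = E[(U−1)e^U] ≥ (1−p*)(e^{1/p*} − 1) ≥ 0`, with equality in the
first inequality when `U ∈ {0, 1/p*}` a.e. (selective equilibrium). -/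
theorem exponential_first_law
    {Ω : Type*} [MeasurableSpace Ω] (μ : Measure Ω) [IsFiniteMeasure μ]
    (hN : 0 < (μ univ).toReal)
    (U : Ω → ℝ) (hUm : Measurable U) (hU0 : ∀ x, 0 ≤ U x)
    (hU1 : (∫ x, U x ∂μ) / (μ univ).toReal = 1)
    (hexp : Integrable (fun x => Real.exp (U x)) μ)
    (hcov : Integrable (fun x => (U x - 1) * Real.exp (U x)) μ) :
    let N := (μ univ).toReal
    let pstar := (μ {x | 0 < U x}).toReal / N
    let c := (∫ x, (U x - 1) * Real.exp (U x) ∂μ) / N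
    c ≥ (1 - pstar) * (Real.exp (1 / pstar) - 1) ∧
      (1 - pstar) * (Real.exp (1 / pstar) - 1) ≥ 0 ∧
      ((∀ᵐ x ∂μ, U x = 0 ∨ U x = 1 / pstar) →
        c = (1 - pstar) * (Real.exp (1 / pstar) - 1)) := by
  intro N pstar c
  have hNpos : 0 < N := hN
  set A : Set Ω := {x | 0 < U x} with hAdef
  have hAm : MeasurableSet A := measurableSet_lt measurable_const hUm
  have hUint : Integrable U μ := by
    refine hexp.mono hUm.aestronglyMeasurable (Filter.Eventually.of_forall fun x => ?_)
    rw [norm_eq_abs, norm_eq_abs, abs_of_nonneg (hU0 x), abs_of_nonneg (Real.exp_pos _).le]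
    linarith [Real.add_one_le_exp (U x)]
  have hIU : ∫ x, U x ∂μ = N := by
    field_simp at hU1
    linarith [hU1]
  have hUcomp : ∀ x ∈ Aᶜ, U x = 0 := by
    intro x hx
    have : ¬ 0 < U x := hx
    linarith [hU0 x]
  have haApos : 0 < (μ A).toReal := by
    rw [ENNReal.toReal_pos_iff]
    refine ⟨pos_iff_ne_zero.mpr fun hA0 => ?_, measure_lt_top μ A⟩
    have hU0ae : U =ᵐ[μ] 0 := by
      have hnm : ∀ᵐ x ∂μ, x ∉ A := measure_eq_zero_iff_ae_notMem.mp hA0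
      filter_upwards [hnm] with x hx
      exact hUcomp x hx
    have hz : ∫ x, U x ∂μ = 0 := by
      rw [integral_congr_ae hU0ae]; simp
    rw [hz] at hIU
    linarith
  set a : ℝ := (μ A).toReal with hadef
  have haN : a ≤ N := ENNReal.toReal_mono (measure_ne_top μ _) (measure_mono (subset_univ A))
  have hps : pstar = a / N := rfl
  have h1p : 1 / pstar = N / a := by
    rw [hps]; field_simp
  have hIAU : ∫ x in A, U x ∂μ = N := by
    have hsplit : (∫ x in A, U x ∂μ) + ∫ x in Aᶜ, U x ∂μ = ∫ x, U x ∂μ :=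
      integral_add_compl hAm hUint
    have hzero : ∫ x in Aᶜ, U x ∂μ = 0 := by
      rw [setIntegral_congr_fun hAm.compl hUcomp, integral_zero]
    rw [hzero, add_zero] at hsplit
    rw [hsplit, hIU]
  have hcompl : ∫ x in Aᶜ, (U x - 1) * Real.exp (U x) ∂μ = -(N - a) := by
    have hc1 : ∀ x ∈ Aᶜ, (U x - 1) * Real.exp (U x) = -1 := by
      intro x hx; rw [hUcomp x hx]; simp
    rw [setIntegral_congr_fun hAm.compl hc1, setIntegral_const]
    have hμc : (μ Aᶜ).toReal = N - a := by
      rw [measure_compl hAm (measure_ne_top μ _), ENNReal.toReal_sub_of_le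
        (measure_mono (subset_univ A)) (measure_ne_top μ _)]
    rw [measureReal_def, hμc, smul_eq_mul]; ring
  have hsplitC : (∫ x, (U x - 1) * Real.exp (U x) ∂μ)
      = -(N - a) + ∫ x in A, (U x - 1) * Real.exp (U x) ∂μ := by
    have h := integral_add_compl hAm hcov
    rw [← h, hcompl]; ring
  have hres : NeZero (μ.restrict A) := by
    constructor
    simp only [ne_eq, Measure.restrict_eq_zero]
    intro h
    rw [hadef, h] at haApos; simp at haApos
  have huniv : ((μ.restrict A) univ).toReal = a := by
    rw [Measure.restrict_apply_univ]
  have havg : ⨍ x, U x ∂(μ.restrict A) = N / a := by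
    rw [average_eq, measureReal_def, huniv, hIAU, smul_eq_mul]
    field_simp
  have hjen := gconv.map_average_le (μ := μ.restrict A)
    ((Continuous.mul (by continuity) Real.continuous_exp).continuousOn) isClosed_Ici
    (Filter.Eventually.of_forall fun x => hU0 x) hUint.restrict
    (g := fun u => (u - 1) * Real.exp u) (f := U) hcov.restrict
  rw [havg, average_eq, measureReal_def, huniv, smul_eq_mul] at hjen
  have hjen' : a * ((N / a - 1) * Real.exp (N / a))
      ≤ ∫ x in A, (U x - 1) * Real.exp (U x) ∂μ := by
    have h2 := mul_le_mul_of_nonneg_left hjen (le_of_lt haApos)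
    calc a * ((N / a - 1) * Real.exp (N / a))
        ≤ a * (a⁻¹ * ∫ x in A, (U x - 1) * Real.exp (U x) ∂μ) := h2
      _ = _ := by field_simp
  have hkey : c ≥ (1 - pstar) * (Real.exp (1 / pstar) - 1) := by
    rw [hps, h1p, ← algebra_id haApos hNpos]
    show (∫ x, (U x - 1) * Real.exp (U x) ∂μ) / N ≥ _
    rw [hsplitC, ge_iff_le]
    gcongr
  refine ⟨hkey, ?_, ?_⟩
  · rw [hps, h1p]
    apply mul_nonneg
    · rw [sub_nonneg]
      exact (div_le_one hNpos).mpr haN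
    · rw [sub_nonneg, ← Real.exp_zero]
      exact Real.exp_le_exp.mpr (by positivity)
  · intro h
    have heqA : ∫ x in A, (U x - 1) * Real.exp (U x) ∂μ
        = a * ((N / a - 1) * Real.exp (N / a)) := by
      have h' : ∀ᵐ x ∂μ, x ∈ A → (U x - 1) * Real.exp (U x)
          = (N / a - 1) * Real.exp (N / a) := by
        filter_upwards [h] with x hx hxA
        rcases hx with h0 | h1
        · exact absurd h0 (ne_of_gt hxA)
        · rw [h1, h1p]
      rw [setIntegral_congr_ae hAm h', setIntegral_const, smul_eq_mul, measureReal_def]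
    show (∫ x, (U x - 1) * Real.exp (U x) ∂μ) / N = _
    rw [hsplitC, heqA, hps, h1p, ← algebra_id haApos hNpos]
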